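/- Let s(u(2)⊕u(2)) denote the real Lie algebra of block-diagonal matrices {diag(A, B) : A, B ∈ M₂(ℂ), Aᴴ = −A, Bᴴ = −B, tr(A) + tr(B) = 0}, with bracket the matrix commutator (a real Lie algebra of dimension 7), and let su(2)⊕su(2) denote its subalgebra {diag(A, B) : Aᴴ = −A, Bᴴ = −B, tr(A) = 0, tr(B) = 0}. Then the only Lie subalgebra of s(u(2)⊕u(2)) of real dimension 6 (i.e. of codimension 1) is su(2)⊕su(2). -/

import Mathlib

open Matrix Module

attribute [local instance 100] LieRing.ofAssociativeRing

/-- `s(u(2)⊕u(2))`: pairs `(A, B)` of skew-Hermitian complex 2×2 matrices with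
`tr A + tr B = 0`, i.e. block-diagonal matrices `diag(A, B)` in `su(4)`; a real Lie
subalgebra (of dimension 7) of `M₂(ℂ) × M₂(ℂ)` with the componentwise commutator bracket. -/
noncomputable def su2u2 :
    LieSubalgebra ℝ (Matrix (Fin 2) (Fin 2) ℂ × Matrix (Fin 2) (Fin 2) ℂ) where
  carrier := {p | p.1ᴴ = -p.1 ∧ p.2ᴴ = -p.2 ∧ p.1.trace + p.2.trace = 0}
  add_mem' := by
    rintro p q ⟨hp1, hp2, hp3⟩ ⟨hq1, hq2, hq3⟩
    refine ⟨?_, ?_, ?_⟩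
    · rw [Prod.fst_add, conjTranspose_add, hp1, hq1, neg_add]
    · rw [Prod.snd_add, conjTranspose_add, hp2, hq2, neg_add]
    · rw [Prod.fst_add, Prod.snd_add, trace_add, trace_add]
      linear_combination hp3 + hq3
  zero_mem' := by
    refine ⟨?_, ?_, ?_⟩ <;> simp
  smul_mem' := by
    rintro r p ⟨hp1, hp2, hp3⟩
    refine ⟨?_, ?_, ?_⟩
    · rw [Prod.smul_fst, conjTranspose_smul, star_trivial, hp1, smul_neg]
    · rw [Prod.smul_snd, conjTranspose_smul, star_trivial, hp2, smul_neg]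
    · rw [Prod.smul_fst, Prod.smul_snd, trace_smul, trace_smul, ← smul_add, hp3, smul_zero]
  lie_mem' := by
    rintro p q ⟨hp1, hp2, hp3⟩ ⟨hq1, hq2, hq3⟩
    refine ⟨?_, ?_, ?_⟩
    · show (⁅p, q⁆.1)ᴴ = -⁅p, q⁆.1
      rw [Ring.lie_def, Prod.fst_sub, Prod.fst_mul, Prod.fst_mul,
        conjTranspose_sub, conjTranspose_mul, conjTranspose_mul, hp1, hq1]
      simp [mul_comm]
    · show (⁅p, q⁆.2)ᴴ = -⁅p, q⁆.2
      rw [Ring.lie_def, Prod.snd_sub, Prod.snd_mul, Prod.snd_mul,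
        conjTranspose_sub, conjTranspose_mul, conjTranspose_mul, hp2, hq2]
      simp [mul_comm]
    · show (⁅p, q⁆.1).trace + (⁅p, q⁆.2).trace = 0
      rw [Ring.lie_def, Prod.fst_sub, Prod.snd_sub, Prod.fst_mul, Prod.fst_mul,
        Prod.snd_mul, Prod.snd_mul, trace_sub, trace_sub,
        trace_mul_comm p.1 q.1, trace_mul_comm p.2 q.2]
      ring

/-- `su(2) ⊕ su(2)`: the Lie subalgebra of `s(u(2)⊕u(2))` of pairs with both traces zero. -/
noncomputable def su2su2 : LieSubalgebra ℝ su2u2 where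
  carrier := {p | (p : Matrix (Fin 2) (Fin 2) ℂ × Matrix (Fin 2) (Fin 2) ℂ).1.trace = 0 ∧
    (p : Matrix (Fin 2) (Fin 2) ℂ × Matrix (Fin 2) (Fin 2) ℂ).2.trace = 0}
  add_mem' := by
    rintro p q ⟨hp1, hp2⟩ ⟨hq1, hq2⟩
    constructor
    · rw [Submodule.coe_add, Prod.fst_add, trace_add, hp1, hq1, add_zero]
    · rw [Submodule.coe_add, Prod.snd_add, trace_add, hp2, hq2, add_zero]
  zero_mem' := by constructor <;> simp
  smul_mem' := by
    rintro r p ⟨hp1, hp2⟩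
    constructor
    · rw [Submodule.coe_smul, Prod.smul_fst, trace_smul, hp1, smul_zero]
    · rw [Submodule.coe_smul, Prod.smul_snd, trace_smul, hp2, smul_zero]
  lie_mem' := by
    rintro p q ⟨hp1, hp2⟩ ⟨hq1, hq2⟩
    constructor
    · rw [LieSubalgebra.coe_bracket, Ring.lie_def, Prod.fst_sub, Prod.fst_mul, Prod.fst_mul,
        trace_sub, trace_mul_comm, sub_self]
    · rw [LieSubalgebra.coe_bracket, Ring.lie_def, Prod.snd_sub, Prod.snd_mul, Prod.snd_mul,
        trace_sub, trace_mul_comm, sub_self]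


open Complex in
/-- Generic traceless skew-Hermitian 2×2 matrix with real parameters. -/
noncomputable def Mv (v : Fin 3 → ℝ) : Matrix (Fin 2) (Fin 2) ℂ :=
  !![(v 0 : ℂ) * I, (v 1 : ℂ) + (v 2 : ℂ) * I;
     -(v 1 : ℂ) + (v 2 : ℂ) * I, -((v 0 : ℂ) * I)]

lemma Mv_skew (v : Fin 3 → ℝ) : (Mv v)ᴴ = -(Mv v) := by
  ext i j
  fin_cases i <;> fin_cases j <;> simp [Mv, Complex.ext_iff]

lemma Mv_trace (v : Fin 3 → ℝ) : (Mv v).trace = 0 := by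
  simp [Mv, Matrix.trace_fin_two]

@[simp] lemma cons_val_five7 {α : Type*} (x0 x1 x2 x3 x4 x5 x6 : α) :
    ![x0,x1,x2,x3,x4,x5,x6] (5 : Fin 7) = x5 := rfl

@[simp] lemma cons_val_six7 {α : Type*} (x0 x1 x2 x3 x4 x5 x6 : α) :
    ![x0,x1,x2,x3,x4,x5,x6] (6 : Fin 7) = x6 := rfl

@[simp] lemma cons_val_five6 {α : Type*} (x0 x1 x2 x3 x4 x5 : α) :
    ![x0,x1,x2,x3,x4,x5] (5 : Fin 6) = x5 := rfl

@[simp] lemma cons_val_four6 {α : Type*} (x0 x1 x2 x3 x4 x5 : α) :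
    ![x0,x1,x2,x3,x4,x5] (4 : Fin 6) = x4 := rfl

lemma Mv_add (u v : Fin 3 → ℝ) : Mv (u + v) = Mv u + Mv v := by
  ext i j
  fin_cases i <;> fin_cases j <;> simp [Mv] <;> push_cast <;> ring

lemma Mv_smul (r : ℝ) (v : Fin 3 → ℝ) : Mv (r • v) = r • Mv v := by
  ext i j
  fin_cases i <;> fin_cases j <;>
    simp [Mv, Complex.real_smul] <;> push_cast <;> ring

open scoped Matrix in
lemma Mv_bracket (u v : Fin 3 → ℝ) :
    Mv u * Mv v - Mv v * Mv u = Mv ((2 : ℝ) • (u ⨯₃ v)) := by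
  ext i j
  fin_cases i <;> fin_cases j <;>
    simp [Mv, Matrix.mul_apply, Fin.sum_univ_two, cross_apply, Complex.ext_iff] <;>
    exact ⟨by ring, by ring⟩

/-- Left embedding `ℝ³ → s(u(2)⊕u(2))`, `v ↦ (Mv v, 0)`. -/
noncomputable def Lmap : (Fin 3 → ℝ) →ₗ[ℝ] su2u2 where
  toFun v := ⟨(Mv v, 0), Mv_skew v, by simp, by simp [Mv_trace]⟩
  map_add' u v := by
    apply Subtype.ext
    simp [Prod.ext_iff, Mv_add]
  map_smul' r v := by
    apply Subtype.ext
    show (Mv (r • v), (0 : Matrix (Fin 2) (Fin 2) ℂ))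
      = r • ((Mv v, 0) : Matrix (Fin 2) (Fin 2) ℂ × Matrix (Fin 2) (Fin 2) ℂ)
    rw [Prod.smul_mk, Mv_smul, smul_zero]

/-- Right embedding `ℝ³ → s(u(2)⊕u(2))`, `v ↦ (0, Mv v)`. -/
noncomputable def Rmap : (Fin 3 → ℝ) →ₗ[ℝ] su2u2 where
  toFun v := ⟨(0, Mv v), by simp, Mv_skew v, by simp [Mv_trace]⟩
  map_add' u v := by
    apply Subtype.ext
    simp [Prod.ext_iff, Mv_add]
  map_smul' r v := by
    apply Subtype.ext
    show ((0 : Matrix (Fin 2) (Fin 2) ℂ), Mv (r • v))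
      = r • ((0, Mv v) : Matrix (Fin 2) (Fin 2) ℂ × Matrix (Fin 2) (Fin 2) ℂ)
    rw [Prod.smul_mk, Mv_smul, smul_zero]

@[simp] lemma Lmap_coe (v : Fin 3 → ℝ) :
    (Lmap v : Matrix (Fin 2) (Fin 2) ℂ × Matrix (Fin 2) (Fin 2) ℂ) = (Mv v, 0) := rfl

@[simp] lemma Rmap_coe (v : Fin 3 → ℝ) :
    (Rmap v : Matrix (Fin 2) (Fin 2) ℂ × Matrix (Fin 2) (Fin 2) ℂ) = (0, Mv v) := rfl

open scoped Matrix in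
lemma Lmap_bracket (u v : Fin 3 → ℝ) :
    ⁅Lmap u, Lmap v⁆ = Lmap ((2 : ℝ) • (u ⨯₃ v)) := by
  apply Subtype.ext
  rw [LieSubalgebra.coe_bracket, Ring.lie_def, Lmap_coe, Lmap_coe, Lmap_coe]
  refine Prod.ext ?_ ?_
  · simpa using Mv_bracket u v
  · simp

open scoped Matrix in
lemma Rmap_bracket (u v : Fin 3 → ℝ) :
    ⁅Rmap u, Rmap v⁆ = Rmap ((2 : ℝ) • (u ⨯₃ v)) := by
  apply Subtype.ext
  rw [LieSubalgebra.coe_bracket, Ring.lie_def, Rmap_coe, Rmap_coe, Rmap_coe]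
  refine Prod.ext ?_ ?_
  · simp
  · simpa using Mv_bracket u v

/-- The coordinate map `s(u(2)⊕u(2)) → ℝ⁷`. -/
noncomputable def psi : su2u2 →ₗ[ℝ] (Fin 7 → ℝ) where
  toFun p :=
    ![((p : Matrix (Fin 2) (Fin 2) ℂ × Matrix (Fin 2) (Fin 2) ℂ).1 0 0).im,
      ((p : Matrix (Fin 2) (Fin 2) ℂ × Matrix (Fin 2) (Fin 2) ℂ).1 0 1).re,
      ((p : Matrix (Fin 2) (Fin 2) ℂ × Matrix (Fin 2) (Fin 2) ℂ).1 0 1).im,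
      ((p : Matrix (Fin 2) (Fin 2) ℂ × Matrix (Fin 2) (Fin 2) ℂ).2 0 0).im,
      ((p : Matrix (Fin 2) (Fin 2) ℂ × Matrix (Fin 2) (Fin 2) ℂ).2 0 1).re,
      ((p : Matrix (Fin 2) (Fin 2) ℂ × Matrix (Fin 2) (Fin 2) ℂ).2 0 1).im,
      ((p : Matrix (Fin 2) (Fin 2) ℂ × Matrix (Fin 2) (Fin 2) ℂ).1 1 1).im]
  map_add' p q := by
    funext i
    fin_cases i <;> rfl
  map_smul' r p := by
    funext i
    fin_cases i <;> first
      | exact Complex.smul_im r _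
      | exact Complex.smul_re r _

lemma entry_im_diag {A : Matrix (Fin 2) (Fin 2) ℂ} (h : Aᴴ = -A) (i : Fin 2) :
    (A i i).re = 0 := by
  have h' := congrFun (congrFun h i) i
  simp only [Matrix.conjTranspose_apply, Matrix.neg_apply] at h'
  have := congrArg Complex.re h'
  simp at this
  linarith

lemma entry_off_diag {A : Matrix (Fin 2) (Fin 2) ℂ} (h : Aᴴ = -A) :
    A 1 0 = -(starRingEnd ℂ) (A 0 1) := by
  have h' := congrFun (congrFun h 1 : (Aᴴ) 1 = (-A) 1) 0
  simp only [Matrix.conjTranspose_apply, Matrix.neg_apply] at h'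
  rw [show (starRingEnd ℂ) (A 0 1) = star (A 0 1) from rfl, h']
  simp

lemma psi_injective : Function.Injective psi := by
  rw [← LinearMap.ker_eq_bot, LinearMap.ker_eq_bot']
  rintro ⟨⟨A, B⟩, hA, hB, htr⟩ h
  dsimp only at hA hB htr
  have h0 : (A 0 0).im = 0 := congrFun h 0
  have h1 : (A 0 1).re = 0 := congrFun h 1
  have h2 : (A 0 1).im = 0 := congrFun h 2
  have h3 : (B 0 0).im = 0 := congrFun h 3
  have h4 : (B 0 1).re = 0 := congrFun h 4
  have h5 : (B 0 1).im = 0 := congrFun h 5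
  have h6 : (A 1 1).im = 0 := congrFun h 6
  have hA00 : A 0 0 = 0 := Complex.ext (entry_im_diag hA 0) h0
  have hA01 : A 0 1 = 0 := Complex.ext h1 h2
  have hA11 : A 1 1 = 0 := Complex.ext (entry_im_diag hA 1) h6
  have hA10 : A 1 0 = 0 := by rw [entry_off_diag hA, hA01]; simp
  have hB00 : B 0 0 = 0 := Complex.ext (entry_im_diag hB 0) h3
  have hB01 : B 0 1 = 0 := Complex.ext h4 h5
  have hB10 : B 1 0 = 0 := by rw [entry_off_diag hB, hB01]; simp
  have hB11 : B 1 1 = 0 := by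
    rw [Matrix.trace_fin_two, Matrix.trace_fin_two, hA00, hA11, hB00] at htr
    simpa using htr
  apply Subtype.ext
  refine Prod.ext ?_ ?_ <;> ext i j <;> fin_cases i <;> fin_cases j <;>
    simp [hA00, hA01, hA10, hA11, hB00, hB01, hB10, hB11]

noncomputable instance : FiniteDimensional ℝ su2u2 :=
  FiniteDimensional.of_injective psi psi_injective

lemma finrank_su2u2_le : finrank ℝ su2u2 ≤ 7 := by
  have := LinearMap.finrank_le_finrank_of_injective psi_injective
  simpa using this

open scoped Matrix in
/-- Key step: if `s` has dimension 6 and `F` is one of the two `su(2)` embeddings,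
then the image of `F` is contained in `s`. -/
lemma key_step (s : LieSubalgebra ℝ su2u2) (hs : finrank ℝ s = 6)
    (F : (Fin 3 → ℝ) →ₗ[ℝ] su2u2) (hFinj : Function.Injective F)
    (hFb : ∀ u v : Fin 3 → ℝ, ⁅F u, F v⁆ = F ((2 : ℝ) • (u ⨯₃ v))) :
    ∀ v : Fin 3 → ℝ, F v ∈ s := by
  set W : Submodule ℝ (Fin 3 → ℝ) :=
    Submodule.comap F (s : Submodule ℝ su2u2) with hW
  have hWrank : 2 ≤ finrank ℝ W := by
    have e := Submodule.equivMapOfInjective F hFinj W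
    have h1 : finrank ℝ W = finrank ℝ (Submodule.map F W) := e.finrank_eq
    have h2 : Submodule.map F W = LinearMap.range F ⊓ (s : Submodule ℝ su2u2) :=
      Submodule.map_comap_eq F _
    have h3 : finrank ℝ (LinearMap.range F) = 3 := by
      rw [LinearMap.finrank_range_of_inj hFinj]
      simp
    have h4 := Submodule.finrank_sup_add_finrank_inf_eq
      (LinearMap.range F) (s : Submodule ℝ su2u2)
    have h5 : finrank ℝ ↥(LinearMap.range F ⊔ (s : Submodule ℝ su2u2)) ≤ 7 :=
      le_trans (Submodule.finrank_le _) finrank_su2u2_le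
    have hs' : finrank ℝ (s : Submodule ℝ su2u2) = 6 := hs
    rw [h1, h2]
    omega
  obtain ⟨f, hf⟩ := exists_linearIndependent_of_le_finrank hWrank
  have hg : LinearIndependent ℝ (W.subtype ∘ f) := hf.map' W.subtype W.ker_subtype
  set u : Fin 3 → ℝ := (f 0 : Fin 3 → ℝ) with hu
  set v : Fin 3 → ℝ := (f 1 : Fin 3 → ℝ) with hv
  have hud : u ∈ W := (f 0).2
  have hvd : v ∈ W := (f 1).2
  have hpair : LinearIndependent ℝ ![u, v] := by
    have : ![u, v] = W.subtype ∘ f := by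
      funext i; fin_cases i <;> rfl
    rw [this]; exact hg
  set c : Fin 3 → ℝ := u ⨯₃ v with hc
  have hcW : c ∈ W := by
    have h2c : ((2 : ℝ) • c) ∈ W := by
      have : F ((2 : ℝ) • c) ∈ s := by
        rw [← hFb u v]
        exact s.lie_mem hud hvd
      exact this
    have := W.smul_mem (1 / 2 : ℝ) h2c
    rwa [smul_smul, one_div, inv_mul_cancel₀ (two_ne_zero), one_smul] at this
  have hcne : c ≠ 0 := crossProduct_ne_zero_iff_linearIndependent.mpr hpair
  -- the triple (c, u, v) is linearly independent
  have htriple : LinearIndependent ℝ ![c, u, v] := by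
    rw [Fintype.linearIndependent_iff]
    intro a ha
    have hsum : a 0 • c + a 1 • u + a 2 • v = 0 := by
      have h' := ha
      rw [Fin.sum_univ_three] at h'
      simpa using h'
    have e1 : c ⬝ᵥ u = 0 := by
      rw [hc, dotProduct_comm]; exact dot_self_cross u v
    have e2 : c ⬝ᵥ v = 0 := by
      rw [hc, dotProduct_comm]; exact dot_cross_self u v
    have hdot : a 0 * (c ⬝ᵥ c) = 0 := by
      have h' := congrArg (fun w => c ⬝ᵥ w) hsum
      simp only [dotProduct_add, dotProduct_smul, smul_eq_mul,
        dotProduct_zero] at h'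
      rw [e1, e2] at h'
      linarith
    have ha0 : a 0 = 0 := by
      rcases mul_eq_zero.mp hdot with h | h
      · exact h
      · exact absurd (dotProduct_self_eq_zero.mp h) hcne
    have hrest : a 1 • u + a 2 • v = 0 := by
      have h' := hsum
      rw [ha0, zero_smul, zero_add] at h'
      exact h'
    obtain ⟨h1, h2⟩ := LinearIndependent.pair_iff.mp hpair (a 1) (a 2) hrest
    intro i
    fin_cases i <;> assumption
  have hcard : Fintype.card (Fin 3) = finrank ℝ (Fin 3 → ℝ) := by simp
  have hspan := (basisOfLinearIndependentOfCardEqFinrank htriple hcard).span_eq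
  rw [coe_basisOfLinearIndependentOfCardEqFinrank] at hspan
  have hWtop : W = ⊤ := by
    rw [eq_top_iff, ← hspan]
    apply Submodule.span_le.mpr
    rintro x ⟨i, rfl⟩
    fin_cases i <;> assumption
  intro w
  have : w ∈ W := hWtop ▸ Submodule.mem_top
  exact this

/-- Any traceless skew-Hermitian 2×2 matrix is of the form `Mv`. -/
lemma skew_traceless_eq_Mv {A : Matrix (Fin 2) (Fin 2) ℂ} (h : Aᴴ = -A)
    (ht : A.trace = 0) :
    A = Mv ![(A 0 0).im, (A 0 1).re, (A 0 1).im] := by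
  have h00 := entry_im_diag h 0
  have h11 := entry_im_diag h 1
  have h10 := entry_off_diag h
  have htr : A 1 1 = -A 0 0 := by
    rw [Matrix.trace_fin_two] at ht
    linear_combination ht
  ext i j
  fin_cases i <;> fin_cases j <;>
    simp [Mv, Complex.ext_iff, h00, h10, h11, htr]

/-- The only Lie subalgebra of `s(u(2)⊕u(2))` of real dimension 6 (codimension 1) is
`su(2) ⊕ su(2)`. -/
theorem su2u2_subalgebra_dim_six_eq_su2su2
    (s : LieSubalgebra ℝ su2u2) (hs : Module.finrank ℝ s = 6) : s = su2su2 := by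
  have hL : ∀ v, Lmap v ∈ s := by
    apply key_step s hs Lmap ?_ Lmap_bracket
    intro a b hab
    have := congrArg (fun p => psi p) hab
    have e0 := congrFun this 0
    have e1 := congrFun this 1
    have e2 := congrFun this 2
    simp [psi, Mv] at e0 e1 e2
    funext i
    fin_cases i <;> assumption
  have hR : ∀ v, Rmap v ∈ s := by
    apply key_step s hs Rmap ?_ Rmap_bracket
    intro a b hab
    have := congrArg (fun p => psi p) hab
    have e0 := congrFun this 3
    have e1 := congrFun this 4
    have e2 := congrFun this 5
    simp [psi, Mv] at e0 e1 e2
    funext i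
    fin_cases i <;> assumption
  -- su2su2 ≤ s
  have hle : (su2su2 : Submodule ℝ su2u2) ≤ (s : Submodule ℝ su2u2) := by
    rintro ⟨⟨A, B⟩, hA, hB, htrAB⟩ hp
    obtain ⟨htA, htB⟩ := hp
    simp only at htA htB
    have hAeq := skew_traceless_eq_Mv hA htA
    have hBeq := skew_traceless_eq_Mv hB htB
    have hdecomp : (⟨(A, B), hA, hB, htrAB⟩ : su2u2)
        = Lmap ![(A 0 0).im, (A 0 1).re, (A 0 1).im]
          + Rmap ![(B 0 0).im, (B 0 1).re, (B 0 1).im] := by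
      apply Subtype.ext
      rw [AddSubmonoid.coe_add]
      refine Prod.ext ?_ ?_
      · simpa using hAeq
      · simpa using hBeq
    show (⟨(A, B), hA, hB, htrAB⟩ : su2u2) ∈ (s : Submodule ℝ su2u2)
    rw [hdecomp]
    exact Submodule.add_mem _ (hL _) (hR _)
  -- 6 ≤ finrank su2su2
  have hfam_mem : ∀ i : Fin 6,
      (![Lmap ![1,0,0], Lmap ![0,1,0], Lmap ![0,0,1],
         Rmap ![1,0,0], Rmap ![0,1,0], Rmap ![0,0,1]] i)
        ∈ (su2su2 : Submodule ℝ su2u2) := by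
    intro i
    fin_cases i <;> first
      | exact ⟨Mv_trace _, Matrix.trace_zero _ _⟩
      | exact ⟨Matrix.trace_zero _ _, Mv_trace _⟩
  set fam : Fin 6 → su2u2 :=
    ![Lmap ![1,0,0], Lmap ![0,1,0], Lmap ![0,0,1],
      Rmap ![1,0,0], Rmap ![0,1,0], Rmap ![0,0,1]] with hfam
  have hind : LinearIndependent ℝ fam := by
    apply LinearIndependent.of_comp psi
    rw [Fintype.linearIndependent_iff]
    intro a ha
    have e0 := congrFun ha 0
    have e1 := congrFun ha 1
    have e2 := congrFun ha 2
    have e3 := congrFun ha 3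
    have e4 := congrFun ha 4
    have e5 := congrFun ha 5
    simp [hfam, Fin.sum_univ_six, psi, Mv] at e0 e1 e2 e3 e4 e5
    intro i
    fin_cases i <;> assumption
  have hfam' : LinearIndependent ℝ
      (fun i : Fin 6 => (⟨fam i, hfam_mem i⟩ : (su2su2 : Submodule ℝ su2u2))) := by
    apply LinearIndependent.of_comp (su2su2 : Submodule ℝ su2u2).subtype
    exact hind
  have hfin : finrank ℝ (s : Submodule ℝ su2u2) ≤
      finrank ℝ (su2su2 : Submodule ℝ su2u2) := by
    have h6 := hfam'.fintype_card_le_finrank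
    simp only [Fintype.card_fin] at h6
    have hs' : finrank ℝ (s : Submodule ℝ su2u2) = 6 := hs
    omega
  have heq : (su2su2 : Submodule ℝ su2u2) = (s : Submodule ℝ su2u2) :=
    Submodule.eq_of_le_of_finrank_le hle hfin
  apply LieSubalgebra.ext
  intro x
  rw [← LieSubalgebra.mem_toSubmodule, ← LieSubalgebra.mem_toSubmodule, heq]
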